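/- In any ARIF loop, R(y·xᵐ)·R(xⁿ·y⁻¹) = R(y·x^{m+k})·R(x^{n−k}·y⁻¹) for all x, y and all integers m, n, k such that k is even or m+n is even. -/

import Mathlib

/-- A loop: a magma with two-sided identity and left/right division. -/
class Loop (M : Type*) extends Mul M, One M where
  ld : M → M → M
  rd : M → M → M
  mul_ld : ∀ x y : M, x * ld x y = y
  ld_mul : ∀ x y : M, ld x (x * y) = y
  rd_mul : ∀ x y : M, rd y x * x = y
  mul_rd : ∀ x y : M, rd (y * x) x = y
  one_mul : ∀ x : M, 1 * x = x
  mul_one : ∀ x : M, x * 1 = x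

/-- An inverse property (IP) loop. -/
class IPLoop (M : Type*) extends Loop M, Inv M where
  inv_mul_cancel_left : ∀ x y : M, x⁻¹ * (x * y) = y
  mul_inv_cancel_right : ∀ x y : M, (y * x) * x⁻¹ = y

/-- Left translation `L(x) : y ↦ x * y` as a permutation. -/
def Loop.Lperm {M : Type*} [Loop M] (x : M) : Equiv.Perm M :=
  ⟨fun y => x * y, fun y => Loop.ld x y, Loop.ld_mul x, Loop.mul_ld x⟩

/-- Right translation `R(x) : y ↦ y * x` as a permutation. -/
def Loop.Rperm {M : Type*} [Loop M] (x : M) : Equiv.Perm M :=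
  ⟨fun y => y * x, fun y => Loop.rd y x, fun y => Loop.mul_rd x y, fun y => Loop.rd_mul x y⟩

/-- Integer powers: `xⁿ = 1 · L(x)ⁿ`. -/
def Loop.pow {M : Type*} [Loop M] (x : M) (n : ℤ) : M := (Loop.Lperm x ^ n) 1

namespace ArifAux

variable {M : Type*} [IPLoop M]

lemma mul_left_cancel'' {x u v : M} (h : x * u = x * v) : u = v := by
  have h1 := Loop.ld_mul x u
  rw [h, Loop.ld_mul] at h1
  exact h1.symm

lemma mul_right_cancel'' {x u v : M} (h : u * x = v * x) : u = v := by
  have h1 := Loop.mul_rd x u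
  rw [h, Loop.mul_rd] at h1
  exact h1.symm

lemma inv_mul_self' (x : M) : x⁻¹ * x = 1 := by
  have h := IPLoop.inv_mul_cancel_left x (1:M)
  rwa [Loop.mul_one] at h

lemma mul_inv_self' (x : M) : x * x⁻¹ = 1 := by
  have h := IPLoop.mul_inv_cancel_right x (1:M)
  rwa [Loop.one_mul] at h

lemma inv_inv'' (x : M) : x⁻¹⁻¹ = x :=
  mul_left_cancel'' ((mul_inv_self' x⁻¹).trans (inv_mul_self' x).symm)

lemma mul_inv_cancel_left'' (x w : M) : x * (x⁻¹ * w) = w := by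
  have h := IPLoop.inv_mul_cancel_left x⁻¹ w
  rwa [inv_inv''] at h

lemma inv_mul_cancel_right'' (w x : M) : (w * x⁻¹) * x = w := by
  have h := IPLoop.mul_inv_cancel_right x⁻¹ w
  rwa [inv_inv''] at h

lemma eq_inv_of_mul_eq_one' {c p : M} (h : c * p = 1) : p = c⁻¹ :=
  mul_left_cancel'' (h.trans (mul_inv_self' c).symm)

lemma mul_inv_rev' (u v : M) : (u * v)⁻¹ = v⁻¹ * u⁻¹ := by
  have h2 := IPLoop.mul_inv_cancel_right (u*v) u⁻¹
  rw [IPLoop.inv_mul_cancel_left u v] at h2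
  have h3 := congrArg (fun w => v⁻¹ * w) h2
  rwa [IPLoop.inv_mul_cancel_left v ((u*v)⁻¹)] at h3

lemma Kapp (x : M) (a b : ℤ) (w : M) :
    (Loop.Lperm x ^ a) ((Loop.Lperm x ^ b) w) = (Loop.Lperm x ^ (a+b)) w := by
  rw [← Equiv.Perm.mul_apply, ← zpow_add]

lemma Rapp (x : M) (a b : ℤ) (w : M) :
    (Loop.Rperm x ^ a) ((Loop.Rperm x ^ b) w) = (Loop.Rperm x ^ (a+b)) w := by
  rw [← Equiv.Perm.mul_apply, ← zpow_add]

lemma pow_def (x : M) (i : ℤ) : Loop.pow x i = (Loop.Lperm x ^ i) 1 := rfl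

lemma pow_zero' (x : M) : Loop.pow x 0 = 1 := by
  show (Loop.Lperm x ^ (0:ℤ)) 1 = 1
  rw [zpow_zero]; rfl

lemma pow_one' (x : M) : Loop.pow x 1 = x := by
  show (Loop.Lperm x ^ (1:ℤ)) 1 = x
  rw [zpow_one]; exact Loop.mul_one x

theorem Lpow (hW2 : ∀ x y z : M, (y * (x * y)) * (x * z) = y * ((x * (y * x)) * z))
    (x : M) : ∀ (i : ℤ) (w : M), Loop.pow x i * w = (Loop.Lperm x ^ i) w := by
  suffices H : ∀ (N : ℕ) (i : ℤ), i.natAbs ≤ N → ∀ w, Loop.pow x i * w = (Loop.Lperm x ^ i) w by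
    exact fun i w => H i.natAbs i le_rfl w
  intro N
  induction N with
  | zero =>
    intro i hi w
    have hi0 : i = 0 := by omega
    subst hi0
    rw [pow_zero', Loop.one_mul, zpow_zero, Equiv.Perm.one_apply]
  | succ N IH =>
    intro i hi w
    rcases Nat.lt_or_ge i.natAbs (N+1) with h | h
    · exact IH i (by omega) w
    have hNa : i.natAbs = N+1 := by omega
    have key : ∀ s t : ℤ, s.natAbs ≤ N → t.natAbs ≤ N → (2*s+t).natAbs ≤ N →
        ∀ w, Loop.pow x (s+2*t) * w = (Loop.Lperm x ^ (s+2*t)) w := by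
      intro s t hs ht hst w
      have hps := IH s hs
      have hpt := IH t ht
      have hpst := IH (2*s+t) hst
      have e1 : Loop.pow x s * Loop.pow x t = Loop.pow x (s+t) := by
        rw [hps, pow_def x t, Kapp, pow_def x (s+t)]
      have e2 : Loop.pow x t * Loop.pow x (s+t) = Loop.pow x (s+2*t) := by
        rw [hpt, pow_def x (s+t), Kapp, pow_def x (s+2*t)]
        exact congrArg (fun a => (Loop.Lperm x ^ a) (1:M)) (by ring)
      have e3 : Loop.pow x t * Loop.pow x s = Loop.pow x (t+s) := by
        rw [hpt, pow_def x s, Kapp, pow_def x (t+s)]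
      have e4 : Loop.pow x s * Loop.pow x (t+s) = Loop.pow x (2*s+t) := by
        rw [hps, pow_def x (t+s), Kapp, pow_def x (2*s+t)]
        exact congrArg (fun a => (Loop.Lperm x ^ a) (1:M)) (by ring)
      have main : ∀ z, Loop.pow x (s+2*t) * (Loop.pow x s * z)
          = (Loop.Lperm x ^ (s+2*t)) ((Loop.Lperm x ^ s) z) := by
        intro z
        have hh := hW2 (Loop.pow x s) (Loop.pow x t) z
        rw [e1, e2, e3, e4, hpst, hpt] at hh
        rw [hh, Kapp, Kapp]
        exact congrArg (fun a => (Loop.Lperm x ^ a) z) (by ring)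
      have hw : Loop.pow x s * ((Loop.Lperm x ^ (-s)) w) = w := by
        rw [hps, Kapp, show s + -s = (0:ℤ) from by ring, zpow_zero, Equiv.Perm.one_apply]
      have h2 := main ((Loop.Lperm x ^ (-s)) w)
      rw [hw] at h2
      rw [h2, Kapp, Kapp]
      exact congrArg (fun a => (Loop.Lperm x ^ a) w) (by ring)
    have hpos : ∀ w, Loop.pow x ((N:ℤ)+1) * w = (Loop.Lperm x ^ ((N:ℤ)+1)) w := by
      rcases Nat.eq_zero_or_pos N with hN0 | hNpos
      · subst hN0
        intro w
        rw [show ((0:ℕ):ℤ) + 1 = 1 from by norm_num, pow_one', zpow_one]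
        rfl
      · rcases Nat.even_or_odd (N+1) with ⟨T, hT⟩ | ⟨T, hT⟩
        · intro w
          have hidx : (0:ℤ) + 2 * (T:ℤ) = (N:ℤ) + 1 := by omega
          rw [← hidx]
          exact key 0 (T:ℤ) (by omega) (by omega) (by omega) w
        · intro w
          have hidx : (-1:ℤ) + 2 * ((T:ℤ)+1) = (N:ℤ) + 1 := by omega
          rw [← hidx]
          exact key (-1) ((T:ℤ)+1) (by omega) (by omega) (by omega) w
    rcases Int.natAbs_eq i with he | he
    · have hieq : i = (N:ℤ)+1 := by rw [he, hNa]; push_cast; ring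
      rw [hieq]; exact hpos w
    · have hieq : i = -((N:ℤ)+1) := by rw [he, hNa]; push_cast; ring
      rw [hieq]
      have hc1 : Loop.pow x ((N:ℤ)+1) * Loop.pow x (-((N:ℤ)+1)) = 1 := by
        rw [hpos]
        show (Loop.Lperm x ^ ((N:ℤ)+1)) ((Loop.Lperm x ^ (-((N:ℤ)+1))) 1) = 1
        rw [Kapp, show ((N:ℤ)+1) + -((N:ℤ)+1) = (0:ℤ) from by ring, zpow_zero,
          Equiv.Perm.one_apply]
      have hcinv : Loop.pow x (-((N:ℤ)+1)) = (Loop.pow x ((N:ℤ)+1))⁻¹ :=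
        eq_inv_of_mul_eq_one' hc1
      rw [hcinv]
      refine mul_left_cancel'' (x := Loop.pow x ((N:ℤ)+1)) ?_
      rw [mul_inv_cancel_left'', hpos, Kapp,
        show ((N:ℤ)+1) + -((N:ℤ)+1) = (0:ℤ) from by ring, zpow_zero, Equiv.Perm.one_apply]

section withW

variable (hW1 : ∀ x y z : M, (z * x) * (y * (x * y)) = (z * (x * (y * x))) * y)
variable (hW2 : ∀ x y z : M, (y * (x * y)) * (x * z) = y * ((x * (y * x)) * z))
variable (hflex : ∀ x y : M, x * (y * x) = (x * y) * x)

include hW2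

lemma pow_add' (x : M) (i j : ℤ) : Loop.pow x i * Loop.pow x j = Loop.pow x (i+j) := by
  rw [Lpow hW2, pow_def x j, Kapp, pow_def x (i+j)]

lemma pow_neg' (x : M) (i : ℤ) : Loop.pow x (-i) = (Loop.pow x i)⁻¹ :=
  eq_inv_of_mul_eq_one' (by
    rw [pow_add' hW2, show i + -i = (0:ℤ) from by ring, pow_zero'])

include hW1 in
theorem Rpow (x : M) : ∀ (i : ℤ) (w : M), w * Loop.pow x i = (Loop.Rperm x ^ i) w := by
  have W1P : ∀ s t : ℤ, ∀ z : M,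
      (z * Loop.pow x s) * Loop.pow x (s+2*t) = (z * Loop.pow x (2*s+t)) * Loop.pow x t := by
    intro s t z
    have h := hW1 (Loop.pow x s) (Loop.pow x t) z
    rw [pow_add' hW2 x s t, pow_add' hW2 x t (s+t), pow_add' hW2 x t s,
      pow_add' hW2 x s (t+s),
      show t+(s+t) = s+2*t from by ring, show s+(t+s) = 2*s+t from by ring] at h
    exact h
  suffices H : ∀ (N : ℕ) (i : ℤ), i.natAbs ≤ N → ∀ w,
      w * Loop.pow x i = (Loop.Rperm x ^ i) w by
    exact fun i w => H i.natAbs i le_rfl w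
  intro N
  induction N with
  | zero =>
    intro i hi w
    have hi0 : i = 0 := by omega
    subst hi0
    rw [pow_zero', Loop.mul_one, zpow_zero, Equiv.Perm.one_apply]
  | succ N IH =>
    intro i hi w
    rcases Nat.lt_or_ge i.natAbs (N+1) with h | h
    · exact IH i (by omega) w
    have hNa : i.natAbs = N+1 := by omega
    have key : ∀ s t : ℤ, s.natAbs ≤ N → t.natAbs ≤ N → (2*s+t).natAbs ≤ N →
        ∀ w, w * Loop.pow x (s+2*t) = (Loop.Rperm x ^ (s+2*t)) w := by
      intro s t hs ht hst w
      have hps := IH s hs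
      have hpt := IH t ht
      have hpst := IH (2*s+t) hst
      have h := W1P s t ((Loop.Rperm x ^ (-s)) w)
      rw [hps, hpst, hpt, Rapp, Rapp, Rapp,
        show s + -s = (0:ℤ) from by ring, zpow_zero, Equiv.Perm.one_apply] at h
      rw [h]
      exact congrArg (fun a => (Loop.Rperm x ^ a) w) (by ring)
    have hpos : ∀ w, w * Loop.pow x ((N:ℤ)+1) = (Loop.Rperm x ^ ((N:ℤ)+1)) w := by
      rcases Nat.eq_zero_or_pos N with hN0 | hNpos
      · subst hN0
        intro w
        rw [show ((0:ℕ):ℤ) + 1 = 1 from by norm_num, pow_one', zpow_one]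
        rfl
      · rcases Nat.even_or_odd (N+1) with ⟨T, hT⟩ | ⟨T, hT⟩
        · intro w
          have hidx : (0:ℤ) + 2 * (T:ℤ) = (N:ℤ) + 1 := by omega
          rw [← hidx]
          exact key 0 (T:ℤ) (by omega) (by omega) (by omega) w
        · intro w
          have hidx : (-1:ℤ) + 2 * ((T:ℤ)+1) = (N:ℤ) + 1 := by omega
          rw [← hidx]
          exact key (-1) ((T:ℤ)+1) (by omega) (by omega) (by omega) w
    rcases Int.natAbs_eq i with he | he
    · have hieq : i = (N:ℤ)+1 := by rw [he, hNa]; push_cast; ring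
      rw [hieq]; exact hpos w
    · have hieq : i = -((N:ℤ)+1) := by rw [he, hNa]; push_cast; ring
      rw [hieq]
      rw [pow_neg' hW2 x ((N:ℤ)+1)]
      refine mul_right_cancel'' (x := Loop.pow x ((N:ℤ)+1)) ?_
      rw [inv_mul_cancel_right'', hpos, Rapp,
        show ((N:ℤ)+1) + -((N:ℤ)+1) = (0:ℤ) from by ring, zpow_zero, Equiv.Perm.one_apply]

lemma mulpow_left (x : M) (i j : ℤ) (w : M) :
    Loop.pow x i * (Loop.pow x j * w) = Loop.pow x (i+j) * w := by
  rw [Lpow hW2 x j w, Lpow hW2 x i, Lpow hW2 x (i+j), Kapp]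

include hW1 in
lemma mulpow_right (x : M) (i j : ℤ) (w : M) :
    (w * Loop.pow x i) * Loop.pow x j = w * Loop.pow x (i+j) := by
  rw [Rpow hW1 hW2 x i, Rpow hW1 hW2 x j, Rpow hW1 hW2 x (i+j), Rapp]
  exact congrArg (fun a => (Loop.Rperm x ^ a) w) (by ring)

lemma cross (x y : M) (i j : ℤ) :
    (Loop.pow x i * y⁻¹) * (y * Loop.pow x j) = Loop.pow x (i+j) := by
  have h0 : (y * Loop.pow x j)⁻¹ = Loop.pow x (-j) * y⁻¹ := by
    rw [mul_inv_rev', pow_neg' hW2]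
  have h1 : Loop.pow x i * y⁻¹ = Loop.pow x (i+j) * (y * Loop.pow x j)⁻¹ := by
    rw [h0, mulpow_left hW2, show i+j+(-j) = i from by ring]
  rw [h1]
  exact inv_mul_cancel_right'' _ _

omit hW2 in
lemma Rperm_inv_apply (c w : M) : (Loop.Rperm c)⁻¹ w = w * c⁻¹ := by
  apply (Loop.Rperm c).injective
  rw [Equiv.Perm.inv_def, Equiv.apply_symm_apply]
  exact (inv_mul_cancel_right'' w c).symm

end withW

/-- The family of translations `R(y xⁱ)`. -/
def Aperm (x y : M) (i : ℤ) : Equiv.Perm M := Loop.Rperm (y * Loop.pow x i)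

lemma Aperm_apply (x y : M) (i : ℤ) (w : M) : Aperm x y i w = w * (y * Loop.pow x i) := rfl

section withW2

variable (hW1 : ∀ x y z : M, (z * x) * (y * (x * y)) = (z * (x * (y * x))) * y)
variable (hW2 : ∀ x y z : M, (y * (x * y)) * (x * z) = y * ((x * (y * x)) * z))
variable (hflex : ∀ x y : M, x * (y * x) = (x * y) * x)

include hW2 in
lemma Aperm_inv_apply (x y : M) (i : ℤ) (w : M) :
    (Aperm x y i)⁻¹ w = w * (Loop.pow x (-i) * y⁻¹) := by
  show (Loop.Rperm (y * Loop.pow x i))⁻¹ w = _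
  rw [Rperm_inv_apply, mul_inv_rev', pow_neg' hW2]

include hW1 hW2 hflex in
lemma G1perm (x y : M) (i j : ℤ) :
    (Aperm x y (-(i+2*j)))⁻¹ * Aperm x y i = (Aperm x y (-j))⁻¹ * Aperm x y (2*i+j) := by
  apply Equiv.ext; intro w
  rw [Equiv.Perm.mul_apply, Equiv.Perm.mul_apply, Aperm_apply, Aperm_apply,
    Aperm_inv_apply hW2, Aperm_inv_apply hW2, neg_neg, neg_neg]
  have h := hW1 (y * Loop.pow x i) (Loop.pow x j * y⁻¹) w
  rw [hflex (Loop.pow x j * y⁻¹) (y * Loop.pow x i), cross hW2 x y j i,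
    mulpow_left hW2 x (j+i) j y⁻¹, mulpow_right hW1 hW2 x i (j+i) y,
    show (j+i)+j = i+2*j from by ring, show i+(j+i) = 2*i+j from by ring] at h
  exact h

include hW1 hW2 hflex in
lemma G2perm (x y : M) (i j : ℤ) :
    Aperm x y (2*i+j) * (Aperm x y (-j))⁻¹ = Aperm x y i * (Aperm x y (-(i+2*j)))⁻¹ := by
  apply Equiv.ext; intro w
  rw [Equiv.Perm.mul_apply, Equiv.Perm.mul_apply, Aperm_inv_apply hW2, Aperm_inv_apply hW2,
    neg_neg, neg_neg, Aperm_apply, Aperm_apply]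
  have h := hW1 (Loop.pow x j * y⁻¹) (y * Loop.pow x i) w
  rw [hflex (Loop.pow x j * y⁻¹) (y * Loop.pow x i), cross hW2 x y j i,
    mulpow_right hW1 hW2 x i (j+i) y, mulpow_left hW2 x (j+i) j y⁻¹,
    show i+(j+i) = 2*i+j from by ring, show (j+i)+j = i+2*j from by ring] at h
  exact h

end withW2

/-- Pure group theory: from the two families of relations, the shift identity follows. -/
lemma engine {G : Type*} [Group G] (A : ℤ → G)
    (hG1 : ∀ i j : ℤ, (A (-(i+2*j)))⁻¹ * A i = (A (-j))⁻¹ * A (2*i+j))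
    (hG2 : ∀ i j : ℤ, A (2*i+j) * (A (-j))⁻¹ = A i * (A (-(i+2*j)))⁻¹) :
    ∀ m n k : ℤ, (Even k ∨ Even (m+n)) →
      (A (-n))⁻¹ * A m = (A (-(n-k)))⁻¹ * A (m+k) := by
  set C := A 2 * (A 0)⁻¹ with hCdef
  set D := (A 0)⁻¹ * A 2 with hDdef
  have Cshift : ∀ w : ℤ, A (w+2) * (A w)⁻¹ = A (w+1) * (A (w-1))⁻¹ := by
    intro w
    have h := hG2 (w+1) (-w)
    rw [show 2*(w+1)+(-w) = w+2 from by ring, show -(-w) = w from by ring,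
      show -((w+1)+2*(-w)) = w-1 from by ring] at h
    exact h
  have Cconst : ∀ w : ℤ, A (w+2) * (A w)⁻¹ = C := by
    intro w
    induction w using Int.induction_on with
    | zero => rw [hCdef]; norm_num
    | succ i ih =>
      have h := Cshift ((i:ℤ)+1)
      rw [show (i:ℤ)+1+1 = (i:ℤ)+2 from by ring, show (i:ℤ)+1-1 = (i:ℤ) from by ring] at h
      rw [h]; exact ih
    | pred i ih =>
      rw [show -(i:ℤ) - 1 + 2 = -(i:ℤ) + 1 from by ring, ← Cshift (-(i:ℤ))]
      exact ih
  have Dshift : ∀ w : ℤ, (A w)⁻¹ * A (w+2) = (A (w+1))⁻¹ * A (w+3) := by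
    intro w
    have h := hG1 (w+2) (-(w+1))
    rw [show -((w+2)+2*(-(w+1))) = w from by ring, show -(-(w+1)) = w+1 from by ring,
      show 2*(w+2)+(-(w+1)) = w+3 from by ring] at h
    exact h
  have Dconst : ∀ w : ℤ, (A w)⁻¹ * A (w+2) = D := by
    intro w
    induction w using Int.induction_on with
    | zero => rw [hDdef]; norm_num
    | succ i ih =>
      have h := Dshift (i:ℤ)
      rw [show (i:ℤ)+3 = (i:ℤ)+1+2 from by ring] at h
      rw [← h]; exact ih
    | pred i ih =>
      have h := Dshift (-(i:ℤ)-1)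
      rw [show -(i:ℤ)-1+1 = -(i:ℤ) from by ring, show -(i:ℤ)-1+3 = -(i:ℤ)+2 from by ring] at h
      rw [h]; exact ih
  have hCD : ∀ w : ℤ, C = A w * D * (A w)⁻¹ := by
    intro w
    rw [← Cconst w, ← Dconst w]
    group
  have commC : ∀ w v : ℤ, C * (A w * (A v)⁻¹) = (A w * (A v)⁻¹) * C := by
    intro w v
    conv_lhs => rw [hCD w]
    conv_rhs => rw [hCD v]
    group
  have Astep : ∀ w : ℤ, A (w+2) = C * A w := by
    intro w
    rw [← Cconst w]; group
  have Apow : ∀ t : ℤ, ∀ w : ℤ, A (w + 2*t) = C^t * A w := by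
    intro t
    induction t using Int.induction_on with
    | zero => intro w; norm_num
    | succ i ih =>
      intro w
      rw [show w + 2*((i:ℤ)+1) = (w + 2*(i:ℤ)) + 2 from by ring, Astep, ih]
      group
    | pred i ih =>
      intro w
      have h2 := Astep (w + 2*(-(i:ℤ)) - 2)
      rw [show (w + 2*(-(i:ℤ)) - 2) + 2 = w + 2*(-(i:ℤ)) from by ring, ih] at h2
      rw [show w + 2*(-(i:ℤ)-1) = w + 2*(-(i:ℤ)) - 2 from by ring]
      have h3 : A (w + 2*(-(i:ℤ)) - 2) = C⁻¹ * (C^(-(i:ℤ)) * A w) := by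
        rw [h2]; group
      rw [h3]; group
  have e2 : ∀ w : ℤ, A (w+3) * (A (w+2))⁻¹ = A (w+1) * (A w)⁻¹ := by
    intro w
    have h1 : A (w+3) = C * A (w+1) := by
      have h := Astep (w+1)
      rw [show w+1+2 = w+3 from by ring] at h
      exact h
    rw [h1, Astep w]
    have hc := commC (w+1) w
    calc (C * A (w+1)) * (C * A w)⁻¹ = C * (A (w+1) * (A w)⁻¹) * C⁻¹ := by group
      _ = ((A (w+1) * (A w)⁻¹) * C) * C⁻¹ := by rw [hc]
      _ = A (w+1) * (A w)⁻¹ := by group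
  have eParity : ∀ t : ℤ, ∀ w : ℤ,
      A (w + 2*t + 1) * (A (w + 2*t))⁻¹ = A (w+1) * (A w)⁻¹ := by
    intro t
    induction t using Int.induction_on with
    | zero => intro w; norm_num
    | succ i ih =>
      intro w
      rw [show w + 2*((i:ℤ)+1) + 1 = (w + 2*(i:ℤ)) + 3 from by ring,
        show w + 2*((i:ℤ)+1) = (w + 2*(i:ℤ)) + 2 from by ring]
      rw [e2 (w + 2*(i:ℤ))]; exact ih w
    | pred i ih =>
      intro w
      have h2 := e2 (w + 2*(-(i:ℤ)) - 2)
      rw [show w + 2*(-(i:ℤ)) - 2 + 3 = w + 2*(-(i:ℤ)) + 1 from by ring,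
        show w + 2*(-(i:ℤ)) - 2 + 2 = w + 2*(-(i:ℤ)) from by ring, ih w] at h2
      rw [show w + 2*(-(i:ℤ)-1) + 1 = (w + 2*(-(i:ℤ)) - 2) + 1 from by ring,
        show w + 2*(-(i:ℤ)-1) = w + 2*(-(i:ℤ)) - 2 from by ring]
      exact h2.symm
  intro m n k hpar
  rcases Int.even_or_odd k with ⟨t, ht⟩ | ⟨t, ht⟩
  · rw [show -(n-k) = -n + 2*t from by omega, show m + k = m + 2*t from by omega,
      Apow t (-n), Apow t m]
    group
  · have hmn : Even (m+n) := by
      rcases hpar with hk | hmn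
      · exfalso; rcases hk with ⟨u, hu⟩; omega
      · exact hmn
    obtain ⟨u, hu⟩ := hmn
    have key : ∀ w : ℤ, A (w + k) * (A w)⁻¹ = C^t * (A (w+1) * (A w)⁻¹) := by
      intro w
      rw [show w + k = (w+1) + 2*t from by omega, Apow t (w+1)]
      group
    have hpar2 := eParity u (-n)
    rw [show -n + 2*u + 1 = m + 1 from by omega, show -n + 2*u = m from by omega] at hpar2
    have h2 := key m
    have h3 := key (-n)
    rw [hpar2] at h2
    rw [← h3] at h2
    rw [show -(n-k) = -n + k from by ring]
    have h5 : A (m+k) = (A (-n+k) * (A (-n))⁻¹) * A m := by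
      rw [← h2]; group
    rw [h5]; group

end ArifAux

/-- In any ARIF loop, `R(y·xᵐ)R(xⁿ·y⁻¹) = R(y·x^{m+k})R(x^{n-k}·y⁻¹)` (pointwise)
whenever `k` is even or `m + n` is even. -/
theorem arif_rrll {M : Type*} [IPLoop M]
    (hflex : ∀ x y : M, x * (y * x) = (x * y) * x)
    (hW1 : ∀ x y z : M, (z * x) * (y * (x * y)) = (z * (x * (y * x))) * y)
    (hW2 : ∀ x y z : M, (y * (x * y)) * (x * z) = y * ((x * (y * x)) * z)) :
    ∀ (x y : M) (m n k : ℤ), (Even k ∨ Even (m + n)) →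
      ∀ z : M,
        (z * (y * Loop.pow x m)) * (Loop.pow x n * y⁻¹) =
          (z * (y * Loop.pow x (m + k))) * (Loop.pow x (n - k) * y⁻¹) := by
  intro x y m n k hpar z
  have hG1 := fun i j => ArifAux.G1perm hW1 hW2 hflex x y i j
  have hG2 := fun i j => ArifAux.G2perm hW1 hW2 hflex x y i j
  have hkey := ArifAux.engine (ArifAux.Aperm x y) hG1 hG2 m n k hpar
  have happ : ((ArifAux.Aperm x y (-n))⁻¹ * ArifAux.Aperm x y m) z
      = ((ArifAux.Aperm x y (-(n-k)))⁻¹ * ArifAux.Aperm x y (m+k)) z := by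
    rw [hkey]
  rw [Equiv.Perm.mul_apply, Equiv.Perm.mul_apply, ArifAux.Aperm_apply, ArifAux.Aperm_apply,
    ArifAux.Aperm_inv_apply hW2, ArifAux.Aperm_inv_apply hW2, neg_neg, neg_neg] at happ
  exact happ
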